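/- Let (L,[-,-],α) be a hom-Lie algebra over R, A an associative commutative R-algebra with an algebra homomorphism φ: A → A, and ρ: L → Der_φ(A) an R-linear map such that (ρ,φ) is a representation of (L,[-,-],α) on A. Then g = A ⊗_R L carries a hom-Lie-Rinehart algebra structure over (A,φ) (the transformation hom-Lie-Rinehart algebra), where the bracket is [a⊗x, b⊗y]_g = φ(ab)⊗[x,y] + φ(a)ρ(x)(b)⊗α(y) − φ(b)ρ(y)(a)⊗α(x), the endomorphism is α̃(a⊗x) = φ(a)⊗α(x), and the anchor is ρ̃(a⊗x)(b) = φ(a)ρ(x)(b), for a,b ∈ A, x,y ∈ L. -/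

import Mathlib

open TensorProduct

section Aux
variable {R A L : Type*} [CommRing R] [CommRing A] [Algebra R A] [AddCommGroup L] [Module R L]
variable (φ : A →ₐ[R] A) (brL : L →ₗ[R] L →ₗ[R] L) (αL : L →ₗ[R] L) (ρL : L →ₗ[R] A →ₗ[R] A)

set_option maxHeartbeats 1000000

/-- inner bilinear map for the transformation bracket -/
noncomputable def trBrInner (a : A) (x : L) : A →ₗ[R] L →ₗ[R] A ⊗[R] L :=
  LinearMap.mk₂ R
    (fun b y => φ (a*b) ⊗ₜ[R] brL x y + (φ a * ρL x b) ⊗ₜ[R] αL y - (φ b * ρL y a) ⊗ₜ[R] αL x)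
    (by intro b₁ b₂ y
        simp only [mul_add, add_mul, map_add, add_tmul, tmul_add, LinearMap.add_apply]
        try abel)
    (by intro r b y
        simp only [mul_smul_comm, smul_mul_assoc, map_smul, smul_tmul', tmul_smul,
          LinearMap.smul_apply, smul_sub, smul_add]
        try abel)
    (by intro b y₁ y₂
        simp only [mul_add, add_mul, map_add, add_tmul, tmul_add, LinearMap.add_apply]
        try abel)
    (by intro r b y
        simp only [mul_smul_comm, smul_mul_assoc, map_smul, smul_tmul', tmul_smul,
          LinearMap.smul_apply, smul_sub, smul_add]
        try abel)

@[simp] lemma trBrInner_apply (a b : A) (x y : L) :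
    trBrInner φ brL αL ρL a x b y
      = φ (a*b) ⊗ₜ[R] brL x y + (φ a * ρL x b) ⊗ₜ[R] αL y - (φ b * ρL y a) ⊗ₜ[R] αL x := rfl

noncomputable def trBrOuter : A →ₗ[R] L →ₗ[R] (A ⊗[R] L →ₗ[R] A ⊗[R] L) :=
  LinearMap.mk₂ R (fun a x => TensorProduct.lift (trBrInner φ brL αL ρL a x))
    (by intro a₁ a₂ x
        apply TensorProduct.ext'
        intro b y
        simp only [TensorProduct.lift.tmul, trBrInner_apply, mul_add, add_mul, map_add,
          add_tmul, tmul_add, LinearMap.add_apply]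
        try abel)
    (by intro r a x
        apply TensorProduct.ext'
        intro b y
        simp only [TensorProduct.lift.tmul, trBrInner_apply, mul_smul_comm, smul_mul_assoc,
          map_smul, smul_tmul', tmul_smul, LinearMap.smul_apply, smul_sub, smul_add]
        try abel)
    (by intro a x₁ x₂
        apply TensorProduct.ext'
        intro b y
        simp only [TensorProduct.lift.tmul, trBrInner_apply, mul_add, add_mul, map_add,
          add_tmul, tmul_add, LinearMap.add_apply]
        try abel)
    (by intro r a x
        apply TensorProduct.ext'
        intro b y
        simp only [TensorProduct.lift.tmul, trBrInner_apply, mul_smul_comm, smul_mul_assoc,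
          map_smul, smul_tmul', tmul_smul, LinearMap.smul_apply, smul_sub, smul_add]
        try abel)

noncomputable def trBr : A ⊗[R] L →ₗ[R] A ⊗[R] L →ₗ[R] A ⊗[R] L :=
  TensorProduct.lift (trBrOuter φ brL αL ρL)

@[simp] lemma trBr_tmul (a b : A) (x y : L) :
    trBr φ brL αL ρL (a ⊗ₜ[R] x) (b ⊗ₜ[R] y)
      = φ (a*b) ⊗ₜ[R] brL x y + (φ a * ρL x b) ⊗ₜ[R] αL y - (φ b * ρL y a) ⊗ₜ[R] αL x := rfl

noncomputable def trα : A ⊗[R] L →ₗ[R] A ⊗[R] L :=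
  TensorProduct.map φ.toLinearMap αL

@[simp] lemma trα_tmul (a : A) (x : L) : trα φ αL (a ⊗ₜ[R] x) = φ a ⊗ₜ[R] αL x := rfl

noncomputable def trρ : A ⊗[R] L →ₗ[R] A →ₗ[R] A :=
  TensorProduct.lift (LinearMap.mk₂ R (fun a x => φ a • ρL x)
    (by intro a₁ a₂ x; simp [add_smul])
    (by intro r a x; rw [map_smul]; exact smul_assoc r (φ a) (ρL x))
    (by intro a x₁ x₂; simp [smul_add])
    (by intro r a x; rw [map_smul]; exact smul_comm (φ a) r (ρL x)))

@[simp] lemma trρ_apply (a b : A) (x : L) : trρ φ ρL (a ⊗ₜ[R] x) b = φ a * ρL x b := rfl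

end Aux

/-- A hom-Lie-Rinehart algebra structure over `(A, φ)` on an `A`-module `L`:
`(L, br, α)` is a hom-Lie algebra over `R`, `α(a•x) = φ(a)•α(x)`, the anchor
`ρ : L → Der_φ(A)` is `R`-linear with `ρ(a•x) = φ(a)·ρ(x)`, `(ρ, φ)` is a representation
of `(L, br, α)` on `A`, and the hom-Leibniz rule `br x (a•y) = φ(a)•br x y + ρ x a • α y`
holds. -/
structure IsHomLieRinehart (R A L : Type*) [CommRing R] [CommRing A] [Algebra R A]
    [AddCommGroup L] [Module R L] [Module A L]
    (br : L → L → L) (φ : A → A) (α : L → L) (ρ : L → A → A) : Prop where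
  br_add_left : ∀ x y z : L, br (x + y) z = br x z + br y z
  br_smul_left : ∀ (r : R) (x y : L), br (r • x) y = r • br x y
  br_skew : ∀ x y : L, br x y = - br y x
  α_add : ∀ x y : L, α (x + y) = α x + α y
  α_smul : ∀ (r : R) (x : L), α (r • x) = r • α x
  α_br : ∀ x y : L, α (br x y) = br (α x) (α y)
  hom_jacobi : ∀ x y z : L,
    br (α x) (br y z) + br (α y) (br z x) + br (α z) (br x y) = 0
  α_smulA : ∀ (a : A) (x : L), α (a • x) = φ a • α x
  ρ_add_left : ∀ (x y : L) (a : A), ρ (x + y) a = ρ x a + ρ y a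
  ρ_smul_left : ∀ (r : R) (x : L) (a : A), ρ (r • x) a = r • ρ x a
  ρ_add_right : ∀ (x : L) (a b : A), ρ x (a + b) = ρ x a + ρ x b
  ρ_smul_right : ∀ (x : L) (r : R) (a : A), ρ x (r • a) = r • ρ x a
  ρ_der : ∀ (x : L) (a b : A), ρ x (a * b) = φ a * ρ x b + φ b * ρ x a
  ρ_smulA : ∀ (a : A) (x : L) (b : A), ρ (a • x) b = φ a * ρ x b
  rep_α : ∀ (x : L) (a : A), ρ (α x) (φ a) = φ (ρ x a)
  rep_br : ∀ (x y : L) (a : A),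
    ρ (br x y) (φ a) = ρ (α x) (ρ y a) - ρ (α y) (ρ x a)
  hom_leibniz : ∀ (x y : L) (a : A), br x (a • y) = φ a • br x y + ρ x a • α y

/-- Given a hom-Lie algebra `(L, br, α)` over `R`, an algebra endomorphism
`φ : A → A` and an action `ρ : L → Der_φ(A)` such that `(ρ, φ)` is a representation of
`(L, br, α)` on `A`, the `A`-module `A ⊗[R] L` carries a hom-Lie-Rinehart algebra structure
over `(A, φ)` — the transformation hom-Lie-Rinehart algebra — whose bracket, twisting map
and anchor are given on pure tensors by the stated formulas. -/
theorem transformation_homLieRinehart (R A L : Type*) [CommRing R] [CommRing A] [Algebra R A]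
    [AddCommGroup L] [Module R L]
    (br : L → L → L) (α : L → L)
    (br_add_left : ∀ x y z : L, br (x + y) z = br x z + br y z)
    (br_smul_left : ∀ (r : R) (x y : L), br (r • x) y = r • br x y)
    (br_skew : ∀ x y : L, br x y = - br y x)
    (α_add : ∀ x y : L, α (x + y) = α x + α y)
    (α_smul : ∀ (r : R) (x : L), α (r • x) = r • α x)
    (α_br : ∀ x y : L, α (br x y) = br (α x) (α y))
    (hom_jacobi : ∀ x y z : L,
      br (α x) (br y z) + br (α y) (br z x) + br (α z) (br x y) = 0)
    (φ : A →ₐ[R] A) (ρ : L → A → A)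
    (ρ_add_left : ∀ (x y : L) (a : A), ρ (x + y) a = ρ x a + ρ y a)
    (ρ_smul_left : ∀ (r : R) (x : L) (a : A), ρ (r • x) a = r • ρ x a)
    (ρ_add_right : ∀ (x : L) (a b : A), ρ x (a + b) = ρ x a + ρ x b)
    (ρ_smul_right : ∀ (x : L) (r : R) (a : A), ρ x (r • a) = r • ρ x a)
    (ρ_der : ∀ (x : L) (a b : A), ρ x (a * b) = φ a * ρ x b + φ b * ρ x a)
    (rep_α : ∀ (x : L) (a : A), ρ (α x) (φ a) = φ (ρ x a))
    (rep_br : ∀ (x y : L) (a : A),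
      ρ (br x y) (φ a) = ρ (α x) (ρ y a) - ρ (α y) (ρ x a)) :
    ∃ (brg : A ⊗[R] L → A ⊗[R] L → A ⊗[R] L) (αg : A ⊗[R] L → A ⊗[R] L)
      (ρg : A ⊗[R] L → A → A),
      IsHomLieRinehart R A (A ⊗[R] L) brg φ αg ρg ∧
      (∀ (a b : A) (x y : L),
        brg (a ⊗ₜ[R] x) (b ⊗ₜ[R] y)
          = φ (a * b) ⊗ₜ[R] br x y + (φ a * ρ x b) ⊗ₜ[R] α y - (φ b * ρ y a) ⊗ₜ[R] α x) ∧
      (∀ (a : A) (x : L), αg (a ⊗ₜ[R] x) = φ a ⊗ₜ[R] α x) ∧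
      (∀ (a b : A) (x : L), ρg (a ⊗ₜ[R] x) b = φ a * ρ x b) := by
  have br_add_right : ∀ x y z : L, br x (y + z) = br x y + br x z := by
    intro x y z
    rw [br_skew, br_add_left, neg_add, ← br_skew, ← br_skew]
  have br_smul_right : ∀ (r : R) (x y : L), br x (r • y) = r • br x y := by
    intro r x y
    rw [br_skew, br_smul_left, ← smul_neg, ← br_skew]
  let brL : L →ₗ[R] L →ₗ[R] L :=
    LinearMap.mk₂ R br br_add_left br_smul_left br_add_right br_smul_right
  let αL : L →ₗ[R] L := { toFun := α, map_add' := α_add, map_smul' := α_smul }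
  let ρL : L →ₗ[R] A →ₗ[R] A :=
    { toFun := fun x => { toFun := ρ x, map_add' := ρ_add_right x,
                          map_smul' := fun r a => ρ_smul_right x r a }
      map_add' := fun x y => LinearMap.ext fun a => ρ_add_left x y a
      map_smul' := fun r x => LinearMap.ext fun a => ρ_smul_left r x a }
  refine ⟨fun u v => trBr φ brL αL ρL u v, fun u => trα φ αL u, fun u a => trρ φ ρL u a,
    ?_, fun a b x y => rfl, fun a x => rfl, fun a b x => rfl⟩
  have hBrT : ∀ (a b : A) (x y : L),
      trBr φ brL αL ρL (a ⊗ₜ[R] x) (b ⊗ₜ[R] y)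
        = φ (a*b) ⊗ₜ[R] br x y + (φ a * ρ x b) ⊗ₜ[R] α y - (φ b * ρ y a) ⊗ₜ[R] α x :=
    fun a b x y => rfl
  have hαT : ∀ (a : A) (x : L), trα φ αL (a ⊗ₜ[R] x) = φ a ⊗ₜ[R] α x := fun a x => rfl
  have hρT : ∀ (a b : A) (x : L), trρ φ ρL (a ⊗ₜ[R] x) b = φ a * ρ x b := fun a b x => rfl
  have hskew : ∀ u v : A ⊗[R] L, trBr φ brL αL ρL u v = - trBr φ brL αL ρL v u := by
    intro u v
    induction u using TensorProduct.induction_on with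
    | zero => simp
    | tmul a x =>
      induction v using TensorProduct.induction_on with
      | zero => simp
      | tmul b y =>
        rw [hBrT, hBrT, br_skew y x, mul_comm b a]
        simp only [tmul_neg]
        abel
      | add v₁ v₂ h₁ h₂ => simp only [map_add, LinearMap.add_apply, h₁, h₂]; abel
    | add u₁ u₂ h₁ h₂ =>
      simp only [map_add, LinearMap.add_apply, h₁, h₂]; abel
  constructor
  · intro u v w; simp [map_add]
  · intro r u v; simp [map_smul]
  · exact hskew
  · intro u v; simp [map_add]
  · intro r u; simp [map_smul]
  · -- α_br
    intro u v
    induction u using TensorProduct.induction_on with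
    | zero => simp
    | tmul a x =>
      induction v using TensorProduct.induction_on with
      | zero => simp
      | tmul b y =>
        rw [hBrT, hαT, hαT, hBrT]
        simp only [map_add, map_sub, hαT, map_mul, rep_α, α_br]
      | add v₁ v₂ h₁ h₂ => simp only [map_add, h₁, h₂]
    | add u₁ u₂ h₁ h₂ =>
      simp only [map_add, LinearMap.add_apply, h₁, h₂]
  · -- hom_jacobi
    intro u v w
    induction u using TensorProduct.induction_on with
    | zero => simp
    | tmul a x =>
      induction v using TensorProduct.induction_on with
      | zero => simp
      | tmul b y =>
        induction w using TensorProduct.induction_on with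
        | zero => simp
        | tmul c z =>
          rw [hαT, hαT, hαT, hBrT, hBrT, hBrT]
          simp only [map_add, map_sub, LinearMap.add_apply, LinearMap.sub_apply, hBrT,
            map_mul, α_br, rep_α, rep_br, ρ_der, mul_add, add_mul, mul_sub, sub_mul,
            add_tmul, sub_tmul, tmul_add, tmul_sub, neg_tmul, tmul_neg]
          rw [show br (α z) (br x y) = -(br (α x) (br y z) + br (α y) (br z x)) from
            eq_neg_of_add_eq_zero_right (hom_jacobi x y z)]
          simp only [show br (α z) (α x) = -br (α x) (α z) from br_skew _ _,
            show br (α y) (α x) = -br (α x) (α y) from br_skew _ _,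
            show br (α z) (α y) = -br (α y) (α z) from br_skew _ _,
            tmul_neg, neg_tmul, tmul_add, neg_add, neg_neg]
          ring_nf
          abel
        | add w₁ w₂ h₁ h₂ =>
          simp only [map_add, LinearMap.add_apply]
          have h := congrArg₂ (· + ·) h₁ h₂
          simp only [add_zero] at h
          rw [← h]
          abel
      | add v₁ v₂ h₁ h₂ =>
        simp only [map_add, LinearMap.add_apply]
        have h := congrArg₂ (· + ·) h₁ h₂
        simp only [add_zero] at h
        rw [← h]
        abel
    | add u₁ u₂ h₁ h₂ =>
      simp only [map_add, LinearMap.add_apply]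
      have h := congrArg₂ (· + ·) h₁ h₂
      simp only [add_zero] at h
      rw [← h]
      abel
  · -- α_smulA
    intro a u
    induction u using TensorProduct.induction_on with
    | zero => simp
    | tmul b x =>
      rw [smul_tmul', smul_eq_mul, hαT, hαT, map_mul, ← smul_eq_mul, smul_tmul']
    | add u₁ u₂ h₁ h₂ => simp only [smul_add, map_add, h₁, h₂]
  · intro u v a; simp [map_add]
  · intro r u a; simp [map_smul]
  · intro u a b; simp [map_add]
  · intro u r a; simp [map_smul]
  · -- ρ_der
    intro u a b
    induction u using TensorProduct.induction_on with
    | zero => simp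
    | tmul c x => rw [hρT, hρT, hρT, ρ_der]; ring
    | add u₁ u₂ h₁ h₂ =>
      simp only [map_add, LinearMap.add_apply, h₁, h₂]; ring
  · -- ρ_smulA
    intro a u b
    induction u using TensorProduct.induction_on with
    | zero => simp
    | tmul c x => rw [smul_tmul', smul_eq_mul, hρT, hρT, map_mul]; ring
    | add u₁ u₂ h₁ h₂ =>
      simp only [smul_add, map_add, LinearMap.add_apply, h₁, h₂]; ring
  · -- rep_α
    intro u a
    induction u using TensorProduct.induction_on with
    | zero => simp
    | tmul c x => rw [hαT, hρT, hρT, rep_α, map_mul]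
    | add u₁ u₂ h₁ h₂ =>
      simp only [map_add, LinearMap.add_apply, h₁, h₂]
  · -- rep_br
    intro u v a
    induction u using TensorProduct.induction_on with
    | zero => simp
    | tmul b x =>
      induction v using TensorProduct.induction_on with
      | zero => simp
      | tmul c y =>
        rw [hBrT, hαT, hαT, hρT, hρT]
        simp only [map_add, map_sub, LinearMap.add_apply, LinearMap.sub_apply, hρT, map_mul,
          ρ_der, rep_α, rep_br]
        ring
      | add v₁ v₂ h₁ h₂ =>
        simp only [map_add, LinearMap.add_apply, LinearMap.map_add, h₁, h₂]; ring
    | add u₁ u₂ h₁ h₂ =>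
      simp only [map_add, LinearMap.add_apply, LinearMap.map_add, h₁, h₂]; ring
  · -- hom_leibniz
    intro u v a
    induction u using TensorProduct.induction_on with
    | zero => simp
    | tmul b x =>
      induction v using TensorProduct.induction_on with
      | zero => simp
      | tmul c y =>
        rw [smul_tmul', smul_eq_mul, hBrT, hBrT, hαT, hρT]
        simp only [smul_add, smul_sub, smul_tmul', smul_eq_mul, ρ_der, map_mul,
          mul_add, add_mul, add_tmul]
        ring_nf
        abel
      | add v₁ v₂ h₁ h₂ =>
        simp only [smul_add, map_add, LinearMap.map_add, h₁, h₂]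
        abel
    | add u₁ u₂ h₁ h₂ =>
      simp only [map_add, LinearMap.add_apply, LinearMap.map_add, add_smul, smul_add, h₁, h₂]
      abel
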